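/- Let X be a finite type, let p : X → ℝ → ℝ be a parameterized probability distribution on X (p(x;θ) > 0 for all x, ∑_{x∈X} p(x;θ) = 1 for all θ) with θ ↦ p(x;θ) twice differentiable for each x, and let f : X → ℝ → ℝ with θ ↦ f(x;θ) twice differentiable for each x. Define L(θ) = ∑_{x∈X} p(x;θ) f(x;θ) and g(x;θ) = f(x;θ) ∂_θ log p(x;θ) + ∂_θ f(x;θ). Then for every θ, L''(θ) = ∑_{x∈X} p(x;θ) · ( g(x;θ) ∂_θ log p(x;θ) + ∂_θ f(x;θ) ∂_θ log p(x;θ) + f(x;θ) ∂²_θ log p(x;θ) + ∂²_θ f(x;θ) ). -/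

import Mathlib

/-- Expanded form of the exact second-order score function estimator:
`L''(θ) = ∑_x p(x;θ) (g ∂_θ log p + ∂_θ f ∂_θ log p + f ∂²_θ log p + ∂²_θ f)`. -/
theorem second_order_estimator_expanded
    {X : Type*} [Fintype X] (p f g : X → ℝ → ℝ)
    (hp_pos : ∀ x θ, 0 < p x θ)
    (hp_sum : ∀ θ, ∑ x, p x θ = 1)
    (hp_smooth : ∀ x, ContDiff ℝ 2 (p x))
    (hf_smooth : ∀ x, ContDiff ℝ 2 (f x))
    (hg : ∀ x θ, g x θ =
      f x θ * deriv (fun θ => Real.log (p x θ)) θ + deriv (f x) θ) :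
    ∀ θ : ℝ,
      deriv (deriv (fun θ => ∑ x, p x θ * f x θ)) θ =
        ∑ x, p x θ *
          (g x θ * deriv (fun θ => Real.log (p x θ)) θ
            + deriv (f x) θ * deriv (fun θ => Real.log (p x θ)) θ
            + f x θ * deriv (deriv (fun θ => Real.log (p x θ))) θ
            + deriv (deriv (f x)) θ) := by
  intro θ
  have hpd : ∀ x, Differentiable ℝ (p x) := fun x => (hp_smooth x).differentiable two_ne_zero
  have hfd : ∀ x, Differentiable ℝ (f x) := fun x => (hf_smooth x).differentiable two_ne_zero
  have hpd2 : ∀ x, Differentiable ℝ (deriv (p x)) := by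
    intro x
    have h : ContDiff ℝ (1 + 1) (p x) := by
      have := hp_smooth x; norm_num at this ⊢; exact this
    exact (contDiff_succ_iff_deriv.mp h).2.2.differentiable one_ne_zero
  have hfd2 : ∀ x, Differentiable ℝ (deriv (f x)) := by
    intro x
    have h : ContDiff ℝ (1 + 1) (f x) := by
      have := hf_smooth x; norm_num at this ⊢; exact this
    exact (contDiff_succ_iff_deriv.mp h).2.2.differentiable one_ne_zero
  have hlogd : ∀ x t, deriv (fun s => Real.log (p x s)) t = deriv (p x) t / p x t :=
    fun x t => deriv.log ((hpd x) t) (hp_pos x t).ne'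
  have hlog2 : ∀ x, deriv (deriv (fun s => Real.log (p x s))) θ
      = (deriv (deriv (p x)) θ * p x θ - deriv (p x) θ * deriv (p x) θ) / (p x θ) ^ 2 := by
    intro x
    have h : deriv (fun s => Real.log (p x s)) = fun s => deriv (p x) s / p x s :=
      funext (hlogd x)
    rw [h, deriv_fun_div ((hpd2 x) θ) ((hpd x) θ) (hp_pos x θ).ne']
  have hL1 : deriv (fun t => ∑ x, p x t * f x t)
      = fun t => ∑ x, (deriv (p x) t * f x t + p x t * deriv (f x) t) := by
    funext t
    rw [deriv_fun_sum (A := fun x t => p x t * f x t) (fun x _ => ((hpd x) t).mul ((hfd x) t))]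
    exact Finset.sum_congr rfl fun x _ => deriv_mul ((hpd x) t) ((hfd x) t)
  rw [hL1, deriv_fun_sum (A := fun x t => deriv (p x) t * f x t + p x t * deriv (f x) t) (fun x _ =>
    (((hpd2 x) θ).mul ((hfd x) θ)).add (((hpd x) θ).mul ((hfd2 x) θ)))]
  refine Finset.sum_congr rfl fun x _ => ?_
  rw [deriv_fun_add (f := fun t => deriv (p x) t * f x t) (g := fun t => p x t * deriv (f x) t) (((hpd2 x) θ).mul ((hfd x) θ)) (((hpd x) θ).mul ((hfd2 x) θ)),
    deriv_fun_mul ((hpd2 x) θ) ((hfd x) θ), deriv_fun_mul ((hpd x) θ) ((hfd2 x) θ),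
    hg, hlogd, hlog2]
  have hne := (hp_pos x θ).ne'
  field_simp
  ring
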